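/- Let V be a real Hilbert space and let v, u¹, …, u^m be unit vectors in V with |⟨u^i, u^j⟩| ≤ 1/m² whenever i ≠ j. Then Σ_{i=1}^m ⟨v, u^i⟩² ≤ 2. -/

import Mathlib

lemma aux_sum_abs_sq {m : ℕ} (c : Fin m → ℝ) (k : ℝ) :
    ∑ x : Fin m, ∑ j : Fin m, |c x| * |c j| / k = (∑ i : Fin m, |c i|) ^ 2 / k := by
  rw [pow_two, Finset.sum_mul_sum]
  simp [Finset.sum_div]

/-- If `v, u¹, …, u^m` are unit vectors in a real Hilbert space with
`|⟨uⁱ, uʲ⟩| ≤ 1/m²` for `i ≠ j`, then `∑ i, ⟨v, uⁱ⟩² ≤ 2`. -/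
theorem stmt14 {V : Type*} [NormedAddCommGroup V] [InnerProductSpace ℝ V]
    (m : ℕ) (v : V) (u : Fin m → V)
    (hv : ‖v‖ = 1) (hu : ∀ i, ‖u i‖ = 1)
    (horth : ∀ i j, i ≠ j → |(inner ℝ (u i) (u j) : ℝ)| ≤ 1 / (m : ℝ) ^ 2) :
    ∑ i : Fin m, (inner ℝ v (u i) : ℝ) ^ 2 ≤ 2 := by
  rcases Nat.eq_zero_or_pos m with hm | hm
  · subst hm; simp
  have hmR : (1 : ℝ) ≤ (m : ℝ) := by exact_mod_cast hm
  set c : Fin m → ℝ := fun i => inner ℝ v (u i) with hc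
  set S : ℝ := ∑ i, c i ^ 2 with hS
  have hS0 : 0 ≤ S := Finset.sum_nonneg fun i _ => sq_nonneg _
  set w : V := ∑ i, c i • u i with hw
  have hvw : (inner ℝ v w : ℝ) = S := by
    simp [hw, inner_sum, real_inner_smul_right, hS, sq]; rfl
  have hww : (inner ℝ w w : ℝ) = ∑ i, ∑ j, c i * c j * inner ℝ (u i) (u j) := by
    simp [hw, inner_sum, sum_inner, real_inner_smul_left, real_inner_smul_right,
      Finset.mul_sum, mul_assoc, -inner_self_eq_norm_sq_to_K]
    exact Finset.sum_congr rfl fun i _ => Finset.sum_congr rfl fun j _ => by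
      rw [real_inner_comm]
  -- Cauchy–Schwarz: S² ≤ ⟨w,w⟩
  have cs : S ^ 2 ≤ (inner ℝ w w : ℝ) := by
    have h1 : (inner ℝ v w : ℝ) ≤ ‖v‖ * ‖w‖ := real_inner_le_norm v w
    rw [hvw, hv, one_mul] at h1
    have : S ^ 2 ≤ ‖w‖ ^ 2 := by
      apply sq_le_sq' _ h1
      nlinarith [norm_nonneg w]
    rwa [← real_inner_self_eq_norm_sq] at this
  -- bound each row of the double sum
  have row : ∀ i : Fin m,
      ∑ j, c i * c j * inner ℝ (u i) (u j) ≤ c i ^ 2 + ∑ j, |c i| * |c j| / (m : ℝ) ^ 2 := by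
    intro i
    rw [← Finset.add_sum_erase _ _ (Finset.mem_univ i)]
    have hii : (inner ℝ (u i) (u i) : ℝ) = 1 := by
      rw [real_inner_self_eq_norm_sq, hu i]; norm_num
    rw [hii]
    have h1 : c i * c i * 1 = c i ^ 2 := by ring
    rw [h1]
    gcongr
    refine le_trans (Finset.sum_le_sum ?_) (Finset.sum_le_sum_of_subset_of_nonneg
      (Finset.erase_subset _ _) ?_)
    · intro j hj
      have hij : i ≠ j := fun h => (Finset.mem_erase.mp hj).1 h.symm
      calc c i * c j * inner ℝ (u i) (u j)
          ≤ |c i * c j * inner ℝ (u i) (u j)| := le_abs_self _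
        _ = |c i| * |c j| * |(inner ℝ (u i) (u j) : ℝ)| := by rw [abs_mul, abs_mul]
        _ ≤ |c i| * |c j| * (1 / (m : ℝ) ^ 2) := by
            apply mul_le_mul_of_nonneg_left (horth i j hij)
            positivity
        _ = |c i| * |c j| / (m : ℝ) ^ 2 := by ring
    · intro j _ _; positivity
  have habs : (∑ i, |c i|) ^ 2 ≤ (m : ℝ) * S := by
    have := sq_sum_le_card_mul_sum_sq (s := Finset.univ) (f := fun i => |c i|)
    simpa [sq_abs, hS] using this
  have key : (inner ℝ w w : ℝ) ≤ 2 * S := by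
    rw [hww]
    calc ∑ i, ∑ j, c i * c j * inner ℝ (u i) (u j)
        ≤ ∑ i, (c i ^ 2 + ∑ j, |c i| * |c j| / (m : ℝ) ^ 2) := Finset.sum_le_sum fun i _ => row i
      _ = S + (∑ i, |c i|) ^ 2 / (m : ℝ) ^ 2 := by
          rw [Finset.sum_add_distrib, hS]
          congr 1
          exact aux_sum_abs_sq c ((m : ℝ) ^ 2)
      _ ≤ S + (m : ℝ) * S / (m : ℝ) ^ 2 := by gcongr
      _ = S + S / (m : ℝ) := by field_simp
      _ ≤ S + S := by
          have hdiv : S / (m : ℝ) ≤ S := by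
            rw [div_le_iff₀ (by linarith : (0:ℝ) < m)]
            nlinarith
          linarith
      _ = 2 * S := by ring
  nlinarith [cs, key, hS0]
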